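/- Let Ω, ∂Ω, σ, n, q be as in the context. Let φ, ψ : ℝ^d → ℝ be C² on a neighborhood of the closure of Ω, satisfying −Δφ = E_φ·φ and −Δψ = E_ψ·ψ on Ω, with ∫_Ω φ(x)² dx = 1 and either φ = ψ or ∫_Ω φ(x)·ψ(x) dx = 0. Assume both φ and ψ satisfy the mixed homogeneous boundary conditions: there are a subset Γ_D ⊆ ∂Ω and a function γ : ∂Ω → ℝ such that φ and ψ vanish on Γ_D and γ(x)·φ(x) + ⟨n(x),∇φ(x)⟩ = 0 and γ(x)·ψ(x) + ⟨n(x),∇ψ(x)⟩ = 0 for all x ∈ ∂Ω ∖ Γ_D. Then q(φ,ψ; E_φ+E_ψ) = (2E_φ if φ = ψ, and 0 otherwise) + ((E_φ−E_ψ)²/4)·∫_Ω ‖x‖²·φ(x)·ψ(x) dx. -/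

import Mathlib

open MeasureTheory
open scoped RealInnerProductSpace Classical

noncomputable section

/-- The Euclidean Laplacian: the sum of the second partial derivatives. -/
def lap {d : ℕ} (u : EuclideanSpace ℝ (Fin d) → ℝ) (x : EuclideanSpace ℝ (Fin d)) : ℝ :=
  ∑ i, fderiv ℝ (fun y => fderiv ℝ u y (EuclideanSpace.single i (1:ℝ))) x
    (EuclideanSpace.single i (1:ℝ))

/-- The divergence: the sum of the partial derivatives of the components. -/
def divg {d : ℕ} (F : EuclideanSpace ℝ (Fin d) → EuclideanSpace ℝ (Fin d))
    (x : EuclideanSpace ℝ (Fin d)) : ℝ :=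
  ∑ i, fderiv ℝ (fun y => ⟪F y, EuclideanSpace.single i (1:ℝ)⟫) x
    (EuclideanSpace.single i (1:ℝ))

namespace QOI
variable {d : ℕ}
local notation "E" => EuclideanSpace ℝ (Fin d)
abbrev e (d : ℕ) (i : Fin d) : EuclideanSpace ℝ (Fin d) := EuclideanSpace.single i (1:ℝ)

lemma inner_grad (u : E → ℝ) (x v : E) : ⟪gradient u x, v⟫ = fderiv ℝ u x v := by
  rw [gradient, InnerProductSpace.toDual_symm_apply]

lemma sum_single_smul (x : E) : ∑ i, x i • e d i = x := by
  have := (EuclideanSpace.basisFun (Fin d) ℝ).sum_repr x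
  simpa [EuclideanSpace.basisFun_repr, EuclideanSpace.basisFun_apply] using this

lemma clm_sum_eval (L : E →L[ℝ] ℝ) (x : E) : ∑ i, x i * L (e d i) = L x := by
  have : L (∑ i, x i • e d i) = ∑ i, x i * L (e d i) := by
    rw [map_sum]; simp [smul_eq_mul]
  rw [sum_single_smul] at this; exact this.symm

lemma inner_eq_sum (a b : E) : ⟪a, b⟫ = ∑ i, a i * b i := by
  simp [PiLp.inner_apply, RCLike.inner_apply]
  exact Finset.sum_congr rfl fun _ _ => mul_comm _ _

def gr (d : ℕ) (u : EuclideanSpace ℝ (Fin d) → ℝ) (y : EuclideanSpace ℝ (Fin d)) :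
    EuclideanSpace ℝ (Fin d) :=
  ∑ i, fderiv ℝ u y (e d i) • e d i

lemma gr_apply (u : E → ℝ) (y : E) (j : Fin d) : gr d u y j = fderiv ℝ u y (e d j) := by
  unfold gr
  rw [show ((∑ i, fderiv ℝ u y (e d i) • e d i : E) j)
      = ∑ i, (fderiv ℝ u y (e d i) • e d i : E) j from by
    rw [WithLp.ofLp_sum]; exact Finset.sum_apply j _ _]
  simp [EuclideanSpace.single_apply]

lemma gr_eq_gradient (u : E → ℝ) (y : E) : gr d u y = gradient u y := by
  ext j
  rw [gr_apply]
  have : gradient u y j = ⟪gradient u y, e d j⟫ := by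
    rw [EuclideanSpace.inner_single_right]; simp
  rw [this, inner_grad]

lemma inner_gr_single (u : E → ℝ) (y : E) (i : Fin d) :
    ⟪gr d u y, e d i⟫ = fderiv ℝ u y (e d i) := by
  rw [gr_eq_gradient, inner_grad]

lemma inner_gr_gr (u v : E → ℝ) (y : E) :
    ⟪gr d u y, gr d v y⟫ = ∑ i, fderiv ℝ u y (e d i) * fderiv ℝ v y (e d i) := by
  rw [inner_eq_sum]
  exact Finset.sum_congr rfl fun i _ => by rw [gr_apply, gr_apply]

lemma inner_single_self' (y : E) (i : Fin d) : ⟪y, e d i⟫ = y i := by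
  simp [EuclideanSpace.inner_single_right]

lemma hd2 {u : E → ℝ} {x : E} (hu : ContDiffAt ℝ 2 u x) :
    HasFDerivAt (fderiv ℝ u) (fderiv ℝ (fderiv ℝ u) x) x := by
  have h : ContDiffAt ℝ 1 (fderiv ℝ u) x := hu.fderiv_right (le_of_eq one_add_one_eq_two)
  exact (h.differentiableAt one_ne_zero).hasFDerivAt

lemma hP {u : E → ℝ} {x : E} (hu : ContDiffAt ℝ 2 u x) (w : E) :
    HasFDerivAt (fun y => fderiv ℝ u y w) ((fderiv ℝ (fderiv ℝ u) x).flip w) x := by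
  have := (hd2 hu).clm_apply (hasFDerivAt_const w x)
  simpa using this

lemma hR {u : E → ℝ} {x : E} (hu : ContDiffAt ℝ 2 u x) :
    HasFDerivAt (fun y => fderiv ℝ u y y)
      (fderiv ℝ u x + (fderiv ℝ (fderiv ℝ u) x).flip x) x := by
  have := (hd2 hu).clm_apply (hasFDerivAt_id x)
  simpa using this

lemma lap_eq {u : E → ℝ} {x : E} (hu : ContDiffAt ℝ 2 u x) :
    lap u x = ∑ i, fderiv ℝ (fderiv ℝ u) x (e d i) (e d i) := by
  unfold lap
  exact Finset.sum_congr rfl fun i _ => by rw [(hP hu (e d i)).fderiv]; rfl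

lemma hproj (x : E) (i : Fin d) :
    HasFDerivAt (fun y : E => y i) (EuclideanSpace.proj (𝕜 := ℝ) i) x :=
  (EuclideanSpace.proj (𝕜 := ℝ) i).hasFDerivAt

/-- the main vector field -/
def BF (d : ℕ) (c cE : ℝ) (φ ψ : EuclideanSpace ℝ (Fin d) → ℝ)
    (y : EuclideanSpace ℝ (Fin d)) : EuclideanSpace ℝ (Fin d) :=
  c • (ψ y • gr d φ y + φ y • gr d ψ y)
  + (cE/2*(φ y * ψ y) - ⟪gr d φ y, gr d ψ y⟫) • y
  + fderiv ℝ φ y y • gr d ψ y + fderiv ℝ ψ y y • gr d φ y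

lemma BF_comp (c cE : ℝ) (φ ψ : E → ℝ) (i : Fin d) :
    (fun y => ⟪BF d c cE φ ψ y, e d i⟫) = fun y =>
      c * (ψ y * fderiv ℝ φ y (e d i) + φ y * fderiv ℝ ψ y (e d i))
      + (cE/2*(φ y * ψ y) - ∑ j, fderiv ℝ φ y (e d j) * fderiv ℝ ψ y (e d j)) * y i
      + fderiv ℝ φ y y * fderiv ℝ ψ y (e d i)
      + fderiv ℝ ψ y y * fderiv ℝ φ y (e d i) := by
  funext y
  simp [BF, inner_add_left, real_inner_smul_left, inner_gr_single, inner_gr_gr,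
    inner_single_self', gr_apply, mul_add]

lemma cross1 (a : Fin d → ℝ) (H : (E) →L[ℝ] ((E) →L[ℝ] ℝ)) (hsym : ∀ v w, H v w = H w v)
    (x : E) :
    ∑ i, x i * (∑ j, a j * H (e d i) (e d j)) = ∑ i, a i * H (e d i) x := by
  have ev : ∀ (w : E), (∑ i, x i * H (e d i) w) = H x w := by
    intro w
    have := clm_sum_eval (H.flip w) x
    simpa [ContinuousLinearMap.flip_apply] using this
  calc ∑ i, x i * (∑ j, a j * H (e d i) (e d j))
      = ∑ i, ∑ j, a j * (x i * H (e d i) (e d j)) := by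
        refine Finset.sum_congr rfl fun i _ => ?_
        rw [Finset.mul_sum]
        exact Finset.sum_congr rfl fun j _ => by ring
    _ = ∑ j, ∑ i, a j * (x i * H (e d i) (e d j)) := Finset.sum_comm
    _ = ∑ j, a j * H x (e d j) := by
        refine Finset.sum_congr rfl fun j _ => ?_
        rw [← Finset.mul_sum, ev (e d j)]
    _ = _ := Finset.sum_congr rfl fun j _ => by rw [hsym x (e d j)]

set_option maxHeartbeats 1000000 in
lemma divg_BF {φ ψ : E → ℝ} {x : E} (hφ : ContDiffAt ℝ 2 φ x) (hψ : ContDiffAt ℝ 2 ψ x)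
    (c cE : ℝ) :
    divg (BF d c cE φ ψ) x =
      c * (2 * ⟪gradient φ x, gradient ψ x⟫ + ψ x * lap φ x + φ x * lap ψ x)
      + cE/2 * (ψ x * fderiv ℝ φ x x + φ x * fderiv ℝ ψ x x)
      + (d : ℝ) * (cE/2*(φ x * ψ x) - ⟪gradient φ x, gradient ψ x⟫)
      + 2 * ⟪gradient φ x, gradient ψ x⟫
      + fderiv ℝ φ x x * lap ψ x + fderiv ℝ ψ x x * lap φ x := by
  have hA : HasFDerivAt φ (fderiv ℝ φ x) x := (hφ.differentiableAt two_ne_zero).hasFDerivAt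
  have hB : HasFDerivAt ψ (fderiv ℝ ψ x) x := (hψ.differentiableAt two_ne_zero).hasFDerivAt
  have hI : HasFDerivAt
      (fun y => ∑ j, fderiv ℝ φ y (e d j) * fderiv ℝ ψ y (e d j))
      (∑ j, (fderiv ℝ φ x (e d j) • (fderiv ℝ (fderiv ℝ ψ) x).flip (e d j)
        + fderiv ℝ ψ x (e d j) • (fderiv ℝ (fderiv ℝ φ) x).flip (e d j))) x :=
    HasFDerivAt.fun_sum fun j _ => (hP hφ (e d j)).fun_mul (hP hψ (e d j))
  have key : ∀ i : Fin d, fderiv ℝ (fun y => ⟪BF d c cE φ ψ y, e d i⟫) x (e d i) =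
      c * (ψ x * fderiv ℝ (fderiv ℝ φ) x (e d i) (e d i)
            + fderiv ℝ φ x (e d i) * fderiv ℝ ψ x (e d i)
          + (φ x * fderiv ℝ (fderiv ℝ ψ) x (e d i) (e d i)
            + fderiv ℝ ψ x (e d i) * fderiv ℝ φ x (e d i)))
      + ((cE/2*(φ x * ψ x) - ∑ j, fderiv ℝ φ x (e d j) * fderiv ℝ ψ x (e d j))
          + x i * (cE/2 * (φ x * fderiv ℝ ψ x (e d i) + ψ x * fderiv ℝ φ x (e d i))
            - ∑ j, (fderiv ℝ φ x (e d j) * fderiv ℝ (fderiv ℝ ψ) x (e d i) (e d j)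
                + fderiv ℝ ψ x (e d j) * fderiv ℝ (fderiv ℝ φ) x (e d i) (e d j))))
      + (fderiv ℝ φ x x * fderiv ℝ (fderiv ℝ ψ) x (e d i) (e d i)
          + fderiv ℝ ψ x (e d i) * (fderiv ℝ φ x (e d i) + fderiv ℝ (fderiv ℝ φ) x (e d i) x))
      + (fderiv ℝ ψ x x * fderiv ℝ (fderiv ℝ φ) x (e d i) (e d i)
          + fderiv ℝ φ x (e d i) * (fderiv ℝ ψ x (e d i) + fderiv ℝ (fderiv ℝ ψ) x (e d i) x)) := by
    intro i
    rw [BF_comp]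
    have h2 := (((((hB.fun_mul (hP hφ (e d i))).fun_add (hA.fun_mul (hP hψ (e d i)))).const_mul c).fun_add
        ((((hA.fun_mul hB).const_mul (cE/2)).fun_sub hI).fun_mul (hproj x i))).fun_add
        ((hR hφ).fun_mul (hP hψ (e d i)))).fun_add ((hR hψ).fun_mul (hP hφ (e d i)))
    rw [h2.fderiv]
    simp only [ContinuousLinearMap.add_apply, ContinuousLinearMap.coe_smul',
      Pi.smul_apply, smul_eq_mul, ContinuousLinearMap.flip_apply,
      ContinuousLinearMap.coe_sub', Pi.sub_apply, ContinuousLinearMap.sum_apply,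
      PiLp.proj_apply, EuclideanSpace.single_apply, if_pos rfl, if_true, mul_one]
  unfold divg
  rw [Finset.sum_congr rfl fun i _ => key i]
  have e1 : lap φ x = ∑ i, fderiv ℝ (fderiv ℝ φ) x (e d i) (e d i) := lap_eq hφ
  have e2 : lap ψ x = ∑ i, fderiv ℝ (fderiv ℝ ψ) x (e d i) (e d i) := lap_eq hψ
  have e3 : ⟪gradient φ x, gradient ψ x⟫ = ∑ i, fderiv ℝ φ x (e d i) * fderiv ℝ ψ x (e d i) := by
    rw [← gr_eq_gradient, ← gr_eq_gradient, inner_gr_gr]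
  have e4 : fderiv ℝ φ x x = ∑ i, x i * fderiv ℝ φ x (e d i) := (clm_sum_eval _ x).symm
  have e5 : fderiv ℝ ψ x x = ∑ i, x i * fderiv ℝ ψ x (e d i) := (clm_sum_eval _ x).symm
  calc ∑ i, (c * (ψ x * fderiv ℝ (fderiv ℝ φ) x (e d i) (e d i)
            + fderiv ℝ φ x (e d i) * fderiv ℝ ψ x (e d i)
          + (φ x * fderiv ℝ (fderiv ℝ ψ) x (e d i) (e d i)
            + fderiv ℝ ψ x (e d i) * fderiv ℝ φ x (e d i)))
      + ((cE/2*(φ x * ψ x) - ∑ j, fderiv ℝ φ x (e d j) * fderiv ℝ ψ x (e d j))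
          + x i * (cE/2 * (φ x * fderiv ℝ ψ x (e d i) + ψ x * fderiv ℝ φ x (e d i))
            - ∑ j, (fderiv ℝ φ x (e d j) * fderiv ℝ (fderiv ℝ ψ) x (e d i) (e d j)
                + fderiv ℝ ψ x (e d j) * fderiv ℝ (fderiv ℝ φ) x (e d i) (e d j))))
      + (fderiv ℝ φ x x * fderiv ℝ (fderiv ℝ ψ) x (e d i) (e d i)
          + fderiv ℝ ψ x (e d i) * (fderiv ℝ φ x (e d i) + fderiv ℝ (fderiv ℝ φ) x (e d i) x))
      + (fderiv ℝ ψ x x * fderiv ℝ (fderiv ℝ φ) x (e d i) (e d i)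
          + fderiv ℝ φ x (e d i) * (fderiv ℝ ψ x (e d i) + fderiv ℝ (fderiv ℝ ψ) x (e d i) x)))
      = ∑ i, ((c * ψ x) * fderiv ℝ (fderiv ℝ φ) x (e d i) (e d i)
        + (c * φ x) * fderiv ℝ (fderiv ℝ ψ) x (e d i) (e d i)
        + (2*c + 2) * (fderiv ℝ φ x (e d i) * fderiv ℝ ψ x (e d i))
        + (cE/2*(φ x * ψ x) - ∑ j, fderiv ℝ φ x (e d j) * fderiv ℝ ψ x (e d j))
        + (cE/2 * φ x) * (x i * fderiv ℝ ψ x (e d i))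
        + (cE/2 * ψ x) * (x i * fderiv ℝ φ x (e d i))
        - x i * (∑ j, fderiv ℝ φ x (e d j) * fderiv ℝ (fderiv ℝ ψ) x (e d i) (e d j))
        - x i * (∑ j, fderiv ℝ ψ x (e d j) * fderiv ℝ (fderiv ℝ φ) x (e d i) (e d j))
        + fderiv ℝ φ x x * fderiv ℝ (fderiv ℝ ψ) x (e d i) (e d i)
        + fderiv ℝ ψ x x * fderiv ℝ (fderiv ℝ φ) x (e d i) (e d i)
        + (fderiv ℝ ψ x (e d i) * fderiv ℝ (fderiv ℝ φ) x (e d i) x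
            + fderiv ℝ φ x (e d i) * fderiv ℝ (fderiv ℝ ψ) x (e d i) x)) :=
      Finset.sum_congr rfl fun i _ => by
        simp only [Finset.sum_add_distrib]; ring
    _ = _ := by
      have symφ := hφ.isSymmSndFDerivAt (by simp)
      have symψ := hψ.isSymmSndFDerivAt (by simp)
      simp only [Finset.sum_add_distrib, Finset.sum_sub_distrib, ← Finset.mul_sum,
        Finset.sum_const, Finset.card_univ, Fintype.card_fin, nsmul_eq_mul]
      rw [cross1 (fun j => fderiv ℝ φ x (e d j)) (fderiv ℝ (fderiv ℝ ψ) x) symψ x,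
        cross1 (fun j => fderiv ℝ ψ x (e d j)) (fderiv ℝ (fderiv ℝ φ) x) symφ x]
      rw [← e1, ← e2, ← e3, ← e4, ← e5]
      ring

/-- the auxiliary vector field -/
def BG (d : ℕ) (φ ψ : EuclideanSpace ℝ (Fin d) → ℝ)
    (y : EuclideanSpace ℝ (Fin d)) : EuclideanSpace ℝ (Fin d) :=
  (‖y‖^2/2) • (ψ y • gr d φ y - φ y • gr d ψ y)

lemma norm_sq_half_hasFDerivAt (x : E) :
    HasFDerivAt (fun y : E => ‖y‖^2/2) (innerSL ℝ x) x := by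
  have h := (HasFDerivAt.inner ℝ (hasFDerivAt_id x) (hasFDerivAt_id x)).const_mul (1/2:ℝ)
  have hfun : (fun y : E => (1/2:ℝ) * ⟪y, y⟫) = fun y : E => ‖y‖^2/2 := by
    funext y; rw [real_inner_self_eq_norm_sq]; ring
  simp only [id] at h
  rw [hfun] at h
  refine h.congr_fderiv ?_
  ext v
  simp only [ContinuousLinearMap.smul_apply, ContinuousLinearMap.comp_apply,
    ContinuousLinearMap.prod_apply, ContinuousLinearMap.id_apply, fderivInnerCLM_apply,
    innerSL_apply_apply, smul_eq_mul]
  rw [real_inner_comm v x]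
  ring

lemma divg_BG {φ ψ : E → ℝ} {x : E} (hφ : ContDiffAt ℝ 2 φ x) (hψ : ContDiffAt ℝ 2 ψ x) :
    divg (BG d φ ψ) x =
      (ψ x * fderiv ℝ φ x x - φ x * fderiv ℝ ψ x x)
      + ‖x‖^2/2 * (ψ x * lap φ x - φ x * lap ψ x) := by
  have hA : HasFDerivAt φ (fderiv ℝ φ x) x := (hφ.differentiableAt two_ne_zero).hasFDerivAt
  have hB : HasFDerivAt ψ (fderiv ℝ ψ x) x := (hψ.differentiableAt two_ne_zero).hasFDerivAt
  have hcomp : ∀ i : Fin d, (fun y => ⟪BG d φ ψ y, e d i⟫) = fun y =>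
      (‖y‖^2/2) * (ψ y * fderiv ℝ φ y (e d i) - φ y * fderiv ℝ ψ y (e d i)) := by
    intro i; funext y
    simp [BG, inner_sub_left, real_inner_smul_left, inner_gr_single, mul_sub, gr_apply]
  have key : ∀ i : Fin d, fderiv ℝ (fun y => ⟪BG d φ ψ y, e d i⟫) x (e d i) =
      (‖x‖^2/2) * ((ψ x * fderiv ℝ (fderiv ℝ φ) x (e d i) (e d i)
          + fderiv ℝ φ x (e d i) * fderiv ℝ ψ x (e d i))
        - (φ x * fderiv ℝ (fderiv ℝ ψ) x (e d i) (e d i)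
          + fderiv ℝ ψ x (e d i) * fderiv ℝ φ x (e d i)))
      + (ψ x * fderiv ℝ φ x (e d i) - φ x * fderiv ℝ ψ x (e d i)) * x i := by
    intro i
    rw [hcomp i]
    have h2 := (norm_sq_half_hasFDerivAt x).fun_mul
      ((hB.fun_mul (hP hφ (e d i))).fun_sub (hA.fun_mul (hP hψ (e d i))))
    rw [h2.fderiv]
    simp only [ContinuousLinearMap.add_apply, ContinuousLinearMap.coe_smul',
      Pi.smul_apply, smul_eq_mul, ContinuousLinearMap.flip_apply,
      ContinuousLinearMap.coe_sub', Pi.sub_apply, innerSL_apply_apply,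
      inner_single_self']
  unfold divg
  rw [Finset.sum_congr rfl fun i _ => key i]
  have e1 : lap φ x = ∑ i, fderiv ℝ (fderiv ℝ φ) x (e d i) (e d i) := lap_eq hφ
  have e2 : lap ψ x = ∑ i, fderiv ℝ (fderiv ℝ ψ) x (e d i) (e d i) := lap_eq hψ
  have e4 : fderiv ℝ φ x x = ∑ i, x i * fderiv ℝ φ x (e d i) := (clm_sum_eval _ x).symm
  have e5 : fderiv ℝ ψ x x = ∑ i, x i * fderiv ℝ ψ x (e d i) := (clm_sum_eval _ x).symm
  calc ∑ i, ((‖x‖^2/2) * ((ψ x * fderiv ℝ (fderiv ℝ φ) x (e d i) (e d i)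
          + fderiv ℝ φ x (e d i) * fderiv ℝ ψ x (e d i))
        - (φ x * fderiv ℝ (fderiv ℝ ψ) x (e d i) (e d i)
          + fderiv ℝ ψ x (e d i) * fderiv ℝ φ x (e d i)))
      + (ψ x * fderiv ℝ φ x (e d i) - φ x * fderiv ℝ ψ x (e d i)) * x i)
      = ∑ i, ((‖x‖^2/2 * ψ x) * fderiv ℝ (fderiv ℝ φ) x (e d i) (e d i)
        - (‖x‖^2/2 * φ x) * fderiv ℝ (fderiv ℝ ψ) x (e d i) (e d i)
        + ψ x * (x i * fderiv ℝ φ x (e d i))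
        - φ x * (x i * fderiv ℝ ψ x (e d i))) :=
      Finset.sum_congr rfl fun i _ => by ring
    _ = _ := by
      simp only [Finset.sum_add_distrib, Finset.sum_sub_distrib, ← Finset.mul_sum]
      rw [← e1, ← e2, ← e4, ← e5]
      ring

lemma grad_inner (u : E → ℝ) (x v : E) : ⟪v, gradient u x⟫ = fderiv ℝ u x v := by
  rw [real_inner_comm, inner_grad]

lemma BF_inner (c cE : ℝ) (φ ψ : E → ℝ) (x nx : E) :
    ⟪BF d c cE φ ψ x, nx⟫ =
      c * (⟪nx, gradient φ x⟫ * ψ x + ⟪nx, gradient ψ x⟫ * φ x)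
      + ⟪x, nx⟫ * (cE / 2 * φ x * ψ x - ⟪gradient φ x, gradient ψ x⟫)
      + ⟪x, gradient φ x⟫ * ⟪nx, gradient ψ x⟫
      + ⟪x, gradient ψ x⟫ * ⟪nx, gradient φ x⟫ := by
  have h1 : ∀ u : E → ℝ, ⟪gr d u x, nx⟫ = ⟪nx, gradient u x⟫ := fun u => by
    rw [gr_eq_gradient, real_inner_comm]
  have h2 : ∀ u : E → ℝ, fderiv ℝ u x x = ⟪x, gradient u x⟫ := fun u => (grad_inner u x x).symm
  simp only [BF, inner_add_left, real_inner_smul_left, inner_sub_left, h1, h2,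
    gr_eq_gradient, real_inner_comm (gradient φ x) nx, real_inner_comm (gradient ψ x) nx]
  ring

lemma BG_inner (φ ψ : E → ℝ) (x nx : E) :
    ⟪BG d φ ψ x, nx⟫ =
      ‖x‖^2/2 * (ψ x * ⟪nx, gradient φ x⟫ - φ x * ⟪nx, gradient ψ x⟫) := by
  have h1 : ∀ u : E → ℝ, ⟪gr d u x, nx⟫ = ⟪nx, gradient u x⟫ := fun u => by
    rw [gr_eq_gradient, real_inner_comm]
  simp only [BG, inner_sub_left, real_inner_smul_left, h1]
  try ring

lemma contDiffOn_gr {u : E → ℝ} {U : Set (EuclideanSpace ℝ (Fin d))} (hU : IsOpen U)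
    (hu : ContDiffOn ℝ 2 u U) : ContDiffOn ℝ 1 (gr d u) U := by
  apply ContDiffOn.sum
  intro i _
  exact ((hu.fderiv_of_isOpen hU (le_of_eq one_add_one_eq_two)).clm_apply
    contDiffOn_const).smul contDiffOn_const

lemma contDiffOn_fxx {u : E → ℝ} {U : Set (EuclideanSpace ℝ (Fin d))} (hU : IsOpen U)
    (hu : ContDiffOn ℝ 2 u U) : ContDiffOn ℝ 1 (fun y => fderiv ℝ u y y) U :=
  (hu.fderiv_of_isOpen hU (le_of_eq one_add_one_eq_two)).clm_apply contDiffOn_id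

lemma contDiffOn_BF {φ ψ : E → ℝ} {U : Set (EuclideanSpace ℝ (Fin d))} (hU : IsOpen U)
    (hφ : ContDiffOn ℝ 2 φ U) (hψ : ContDiffOn ℝ 2 ψ U) (c cE : ℝ) :
    ContDiffOn ℝ 1 (BF d c cE φ ψ) U := by
  have hgφ := contDiffOn_gr hU hφ
  have hgψ := contDiffOn_gr hU hψ
  have h1φ : ContDiffOn ℝ 1 φ U := hφ.of_le one_le_two
  have h1ψ : ContDiffOn ℝ 1 ψ U := hψ.of_le one_le_two
  exact ((((contDiffOn_const.fun_smul ((h1ψ.fun_smul hgφ).add (h1φ.fun_smul hgψ))).add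
    (((contDiffOn_const.mul (h1φ.mul h1ψ)).sub (ContDiffOn.inner ℝ hgφ hgψ)).fun_smul
      contDiffOn_id)).add
    ((contDiffOn_fxx hU hφ).fun_smul hgψ)).add ((contDiffOn_fxx hU hψ).fun_smul hgφ))

lemma contDiffOn_BG {φ ψ : E → ℝ} {U : Set (EuclideanSpace ℝ (Fin d))} (hU : IsOpen U)
    (hφ : ContDiffOn ℝ 2 φ U) (hψ : ContDiffOn ℝ 2 ψ U) :
    ContDiffOn ℝ 1 (BG d φ ψ) U := by
  have hgφ := contDiffOn_gr hU hφ
  have hgψ := contDiffOn_gr hU hψ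
  have h1φ : ContDiffOn ℝ 1 φ U := hφ.of_le one_le_two
  have h1ψ : ContDiffOn ℝ 1 ψ U := hψ.of_le one_le_two
  have hn : ContDiffOn ℝ 1 (fun y : E => ‖y‖^2/2) U :=
    ((contDiff_norm_sq ℝ).contDiffOn).div_const 2
  exact hn.smul ((h1ψ.smul hgφ).sub (h1φ.smul hgψ))

end QOI

open QOI

/-- The boundary bilinear form `q(u, v; 𝓔)`. -/
def qform (d : ℕ) (Ω : Set (EuclideanSpace ℝ (Fin d)))
    (n : EuclideanSpace ℝ (Fin d) → EuclideanSpace ℝ (Fin d))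
    (u v : EuclideanSpace ℝ (Fin d) → ℝ) (cE : ℝ) : ℝ :=
  ∫ x in frontier Ω,
    (((d : ℝ) - 2) / 2 * (⟪n x, gradient u x⟫ * v x + ⟪n x, gradient v x⟫ * u x)
      + ⟪x, n x⟫ * (cE / 2 * u x * v x - ⟪gradient u x, gradient v x⟫)
      + ⟪x, gradient u x⟫ * ⟪n x, gradient v x⟫
      + ⟪x, gradient v x⟫ * ⟪n x, gradient u x⟫) ∂(μH[(d:ℝ) - 1])

theorem quasi_orthogonality_identity
    (d : ℕ) (hd : 2 ≤ d) (Ω : Set (EuclideanSpace ℝ (Fin d)))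
    (hΩo : IsOpen Ω) (hΩb : Bornology.IsBounded Ω)
    (n : EuclideanSpace ℝ (Fin d) → EuclideanSpace ℝ (Fin d))
    (hGG : ∀ F : EuclideanSpace ℝ (Fin d) → EuclideanSpace ℝ (Fin d),
      (∃ U, IsOpen U ∧ closure Ω ⊆ U ∧ ContDiffOn ℝ 1 F U) →
      (∫ x in Ω, divg F x) = ∫ x in frontier Ω, ⟪F x, n x⟫ ∂(μH[(d:ℝ) - 1]))
    (φ ψ : EuclideanSpace ℝ (Fin d) → ℝ) (Eφ Eψ : ℝ)
    (hφr : ∃ U, IsOpen U ∧ closure Ω ⊆ U ∧ ContDiffOn ℝ 2 φ U) (hψr : ∃ U, IsOpen U ∧ closure Ω ⊆ U ∧ ContDiffOn ℝ 2 ψ U)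
    (hHφ : ∀ x ∈ Ω, -lap φ x = Eφ * φ x) (hHψ : ∀ x ∈ Ω, -lap ψ x = Eψ * ψ x)
    (hφnorm : (∫ x in Ω, (φ x) ^ 2) = 1)
    (horth : φ = ψ ∨ (∫ x in Ω, φ x * ψ x) = 0)
    (hbc : ∃ ΓD ⊆ frontier Ω, ∃ γ : EuclideanSpace ℝ (Fin d) → ℝ,
      (∀ x ∈ ΓD, φ x = 0 ∧ ψ x = 0) ∧
      ∀ x ∈ frontier Ω \ ΓD,
        γ x * φ x + ⟪n x, gradient φ x⟫ = 0 ∧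
        γ x * ψ x + ⟪n x, gradient ψ x⟫ = 0)
    :
    qform d Ω n φ ψ (Eφ + Eψ)
      = (if φ = ψ then 2 * Eφ else 0)
        + (Eφ - Eψ) ^ 2 / 4 * ∫ x in Ω, ‖x‖ ^ 2 * φ x * ψ x := by
  obtain ⟨U₁, hU₁o, hU₁s, hφU⟩ := hφr
  obtain ⟨U₂, hU₂o, hU₂s, hψU⟩ := hψr
  have hUo : IsOpen (U₁ ∩ U₂) := hU₁o.inter hU₂o
  have hUs : closure Ω ⊆ U₁ ∩ U₂ := Set.subset_inter hU₁s hU₂s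
  have hφ2 : ContDiffOn ℝ 2 φ (U₁ ∩ U₂) := hφU.mono Set.inter_subset_left
  have hψ2 : ContDiffOn ℝ 2 ψ (U₁ ∩ U₂) := hψU.mono Set.inter_subset_right
  have hφAt : ∀ x ∈ U₁ ∩ U₂, ContDiffAt ℝ 2 φ x := fun x hx =>
    hφ2.contDiffAt (hUo.mem_nhds hx)
  have hψAt : ∀ x ∈ U₁ ∩ U₂, ContDiffAt ℝ 2 ψ x := fun x hx =>
    hψ2.contDiffAt (hUo.mem_nhds hx)
  have hcomp : IsCompact (closure Ω) := hΩb.isCompact_closure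
  have hmeasΩ : MeasurableSet Ω := hΩo.measurableSet
  have hint : ∀ f : EuclideanSpace ℝ (Fin d) → ℝ, ContinuousOn f (closure Ω) →
      IntegrableOn f Ω volume :=
    fun f hf => (hf.integrableOn_compact hcomp).mono_set subset_closure
  have hφc : ContinuousOn φ (closure Ω) := hφ2.continuousOn.mono hUs
  have hψc : ContinuousOn ψ (closure Ω) := hψ2.continuousOn.mono hUs
  have hgrφc : ContinuousOn (gr d φ) (closure Ω) :=
    (contDiffOn_gr hUo hφ2).continuousOn.mono hUs
  have hgrψc : ContinuousOn (gr d ψ) (closure Ω) :=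
    (contDiffOn_gr hUo hψ2).continuousOn.mono hUs
  -- the auxiliary scalar functions
  set W : EuclideanSpace ℝ (Fin d) → ℝ :=
    fun x => ψ x * ⟪x, gradient φ x⟫ - φ x * ⟪x, gradient ψ x⟫ with hW
  have hWeq : W = fun x => ψ x * ⟪x, gr d φ x⟫ - φ x * ⟪x, gr d ψ x⟫ := by
    funext x; rw [hW]; simp [gr_eq_gradient]
  have hWint : IntegrableOn W Ω volume := by
    rw [hWeq]
    exact hint _ ((hψc.mul (continuousOn_id.inner hgrφc)).sub
      (hφc.mul (continuousOn_id.inner hgrψc)))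
  have hPQint : IntegrableOn (fun x => φ x * ψ x) Ω volume := hint _ (hφc.mul hψc)
  have hMint : IntegrableOn (fun x => ‖x‖^2 * φ x * ψ x) Ω volume :=
    hint _ ((((continuous_norm.pow 2).continuousOn).mul hφc).mul hψc)
  -- equation from the main field BF
  have hBF := hGG (BF d (((d:ℝ)-2)/2) (Eφ+Eψ) φ ψ)
    ⟨U₁ ∩ U₂, hUo, hUs, contDiffOn_BF hUo hφ2 hψ2 _ _⟩
  have hL1 : (∫ x in Ω, divg (BF d (((d:ℝ)-2)/2) (Eφ+Eψ) φ ψ) x)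
      = (Eφ+Eψ) * (∫ x in Ω, φ x * ψ x) + (Eφ-Eψ)/2 * ∫ x in Ω, W x := by
    rw [setIntegral_congr_fun hmeasΩ
      (g := fun x => (Eφ+Eψ) * (φ x * ψ x) + (Eφ-Eψ)/2 * W x)
      (fun x hx => by
        have hx' : x ∈ U₁ ∩ U₂ := hUs (subset_closure hx)
        have h := divg_BF (hφAt x hx') (hψAt x hx') (((d:ℝ)-2)/2) (Eφ+Eψ)
        have lφ : lap φ x = -(Eφ * φ x) := by linarith [hHφ x hx]
        have lψ : lap ψ x = -(Eψ * ψ x) := by linarith [hHψ x hx]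
        rw [h, lφ, lψ, hW]
        simp only [grad_inner]
        ring)]
    rw [integral_add (hPQint.const_mul _) (hWint.const_mul _),
      integral_const_mul _ _, integral_const_mul _ _]
  -- equation from the auxiliary field BG
  have hBG := hGG (BG d φ ψ) ⟨U₁ ∩ U₂, hUo, hUs, contDiffOn_BG hUo hφ2 hψ2⟩
  have hL2 : (∫ x in Ω, divg (BG d φ ψ) x)
      = (∫ x in Ω, W x) + (Eψ-Eφ)/2 * ∫ x in Ω, ‖x‖^2 * φ x * ψ x := by
    rw [setIntegral_congr_fun hmeasΩ
      (g := fun x => W x + (Eψ-Eφ)/2 * (‖x‖^2 * φ x * ψ x))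
      (fun x hx => by
        have hx' : x ∈ U₁ ∩ U₂ := hUs (subset_closure hx)
        have h := divg_BG (hφAt x hx') (hψAt x hx')
        have lφ : lap φ x = -(Eφ * φ x) := by linarith [hHφ x hx]
        have lψ : lap ψ x = -(Eψ * ψ x) := by linarith [hHψ x hx]
        rw [h, lφ, lψ, hW]
        simp only [grad_inner]
        ring)]
    rw [integral_add hWint (hMint.const_mul _), integral_const_mul _ _]
  have hbdry0 : (∫ x in frontier Ω, ⟪BG d φ ψ x, n x⟫ ∂(μH[(d:ℝ)-1])) = 0 := by
    obtain ⟨ΓD, hΓD, γ, hD, hN⟩ := hbc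
    rw [setIntegral_congr_fun isClosed_frontier.measurableSet
      (g := fun _ => (0:ℝ)) (fun x hx => by
        rw [BG_inner]
        by_cases hxD : x ∈ ΓD
        · obtain ⟨h1, h2⟩ := hD x hxD
          rw [h1, h2]; ring
        · obtain ⟨h1, h2⟩ := hN x ⟨hx, hxD⟩
          have e1 : ⟪n x, gradient φ x⟫ = -(γ x * φ x) := by linarith
          have e2 : ⟪n x, gradient ψ x⟫ = -(γ x * ψ x) := by linarith
          rw [e1, e2]; ring)]
    simp
  have hWM : (∫ x in Ω, W x) = (Eφ-Eψ)/2 * ∫ x in Ω, ‖x‖^2 * φ x * ψ x := by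
    rw [hbdry0] at hBG
    rw [hL2] at hBG
    linarith
  have hq : qform d Ω n φ ψ (Eφ + Eψ)
      = ∫ x in frontier Ω, ⟪BF d (((d:ℝ)-2)/2) (Eφ+Eψ) φ ψ x, n x⟫ ∂(μH[(d:ℝ)-1]) := by
    unfold qform
    exact congrArg (MeasureTheory.integral _)
      (funext fun x => (BF_inner (((d:ℝ)-2)/2) (Eφ+Eψ) φ ψ x (n x)).symm)
  have main : qform d Ω n φ ψ (Eφ + Eψ)
      = (Eφ+Eψ) * (∫ x in Ω, φ x * ψ x)
        + (Eφ-Eψ)^2/4 * ∫ x in Ω, ‖x‖^2 * φ x * ψ x := by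
    rw [hq, ← hBF, hL1, hWM]; ring
  by_cases hfe : φ = ψ
  · have hE : Eφ = Eψ := by
      by_contra hne
      have hzero : ∀ x ∈ Ω, φ x = 0 := by
        intro x hx
        have h1 := hHφ x hx
        have h2 := hHψ x hx
        rw [← hfe] at h2
        have : (Eφ - Eψ) * φ x = 0 := by linarith
        exact (mul_eq_zero.mp this).resolve_left (sub_ne_zero.mpr hne)
      have hz : (∫ x in Ω, (φ x)^2) = 0 := by
        rw [setIntegral_congr_fun hmeasΩ (g := fun _ => (0:ℝ))
          (fun x hx => by rw [hzero x hx]; ring)]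
        simp
      rw [hz] at hφnorm
      norm_num at hφnorm
    have hI1 : (∫ x in Ω, φ x * ψ x) = 1 := by
      have : (fun x => φ x * ψ x) = fun x => (φ x)^2 := funext fun x => by
        rw [← hfe]; ring
      rw [show (∫ x in Ω, φ x * ψ x) = ∫ x in Ω, (φ x)^2 from by rw [this]]
      exact hφnorm
    rw [main, if_pos hfe, hI1, hE]
    ring
  · have hI0 : (∫ x in Ω, φ x * ψ x) = 0 := horth.resolve_left hfe
    rw [main, if_neg hfe, hI0]
    ring
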